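/- Define E : ℝ × ℝ × (ℝ \ {0}) → ℝ³ by E(ρ, θ, w) = (ρ(sin(w+θ) − sin θ)/w, −ρ(cos(w+θ) − cos θ)/w, ρ²(w − sin w)/(2w²)). Then at every point (ρ, θ, w) with w ≠ 0, E is differentiable and the determinant of its Jacobian matrix (the 3×3 matrix of partial derivatives with respect to ρ, θ, w) equals ρ³(2 − 2cos w − w sin w)/w⁴. -/

import Mathlib

open Real

set_option maxHeartbeats 2000000 in
/-- The Jacobian determinant of the Heisenberg exponential map in cylindrical coordinates:
`det(J exp⁰ₚ)(ρ,θ,w) = ρ³(2 - 2cos w - w sin w)/w⁴` (equation (2.17) of the paper). -/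
theorem stmt5 (E : ℝ × ℝ × ℝ → ℝ × ℝ × ℝ)
    (hE : ∀ ρ θ w : ℝ, w ≠ 0 → E (ρ, θ, w) =
      (ρ * (sin (w + θ) - sin θ) / w,
       -(ρ * (cos (w + θ) - cos θ)) / w,
       ρ ^ 2 * (w - sin w) / (2 * w ^ 2)))
    (ρ θ w : ℝ) (hw : w ≠ 0) :
    DifferentiableAt ℝ E (ρ, θ, w) ∧
    (Matrix.of
      ![![(fderiv ℝ E (ρ, θ, w) (1, 0, 0)).1,
          (fderiv ℝ E (ρ, θ, w) (0, 1, 0)).1,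
          (fderiv ℝ E (ρ, θ, w) (0, 0, 1)).1],
        ![(fderiv ℝ E (ρ, θ, w) (1, 0, 0)).2.1,
          (fderiv ℝ E (ρ, θ, w) (0, 1, 0)).2.1,
          (fderiv ℝ E (ρ, θ, w) (0, 0, 1)).2.1],
        ![(fderiv ℝ E (ρ, θ, w) (1, 0, 0)).2.2,
          (fderiv ℝ E (ρ, θ, w) (0, 1, 0)).2.2,
          (fderiv ℝ E (ρ, θ, w) (0, 0, 1)).2.2]]).det
      = ρ ^ 3 * (2 - 2 * cos w - w * sin w) / w ^ 4 := by
  have hw' : ((ρ, θ, w) : ℝ × ℝ × ℝ).2.2 ≠ 0 := hw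
  have hρ : HasFDerivAt (fun q : ℝ × ℝ × ℝ => q.1) (ContinuousLinearMap.fst ℝ ℝ (ℝ × ℝ)) (ρ, θ, w) := hasFDerivAt_fst
  have hθ : HasFDerivAt (fun q : ℝ × ℝ × ℝ => q.2.1)
      ((ContinuousLinearMap.fst ℝ ℝ ℝ).comp (ContinuousLinearMap.snd ℝ ℝ (ℝ × ℝ))) (ρ, θ, w) :=
    hasFDerivAt_fst.comp _ hasFDerivAt_snd
  have hwd : HasFDerivAt (fun q : ℝ × ℝ × ℝ => q.2.2)
      ((ContinuousLinearMap.snd ℝ ℝ ℝ).comp (ContinuousLinearMap.snd ℝ ℝ (ℝ × ℝ))) (ρ, θ, w) :=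
    hasFDerivAt_snd.comp _ hasFDerivAt_snd
  have hinv1 : HasFDerivAt (fun q : ℝ × ℝ × ℝ => (q.2.2)⁻¹)
      ((-(w ^ 2)⁻¹) • ((ContinuousLinearMap.snd ℝ ℝ ℝ).comp (ContinuousLinearMap.snd ℝ ℝ (ℝ × ℝ)))) (ρ, θ, w) :=
    (hasDerivAt_inv hw).comp_hasFDerivAt _ hwd
  have hf1 := (hρ.mul ((hwd.add hθ).sin.sub hθ.sin)).mul hinv1
  have hf2 := ((hρ.mul ((hwd.add hθ).cos.sub hθ.cos)).neg).mul hinv1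
  have hf3 := ((hρ.mul hρ).mul (hwd.sub hwd.sin)).mul ((hinv1.mul hinv1).const_mul (2 : ℝ)⁻¹)
  have hF := hf1.prodMk (hf2.prodMk hf3)
  have heq : E =ᶠ[nhds ((ρ, θ, w) : ℝ × ℝ × ℝ)] (fun q : ℝ × ℝ × ℝ =>
      (q.1 * (sin (q.2.2 + q.2.1) - sin q.2.1) * (q.2.2)⁻¹,
       -(q.1 * (cos (q.2.2 + q.2.1) - cos q.2.1)) * (q.2.2)⁻¹,
       q.1 * q.1 * (q.2.2 - sin q.2.2) * ((2 : ℝ)⁻¹ * (q.2.2⁻¹ * q.2.2⁻¹)))) := by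
    have hopen : IsOpen {q : ℝ × ℝ × ℝ | q.2.2 ≠ 0} :=
      isOpen_compl_singleton.preimage (continuous_snd.snd)
    filter_upwards [hopen.mem_nhds hw'] with q hq
    obtain ⟨a, b, c⟩ := q
    rw [hE a b c hq]
    simp only [Prod.mk.injEq]
    refine ⟨by field_simp, by field_simp, by field_simp⟩
  have hE' := hF.congr_of_eventuallyEq heq
  refine ⟨hE'.differentiableAt, ?_⟩
  rw [hE'.fderiv]
  simp only [Matrix.det_fin_three, Matrix.of_apply, Matrix.cons_val', Matrix.cons_val_zero,
    Matrix.cons_val_one, Matrix.head_cons, Matrix.head_fin_const, Matrix.empty_val',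
    Matrix.cons_val_fin_one, ContinuousLinearMap.prod_apply, ContinuousLinearMap.add_apply,
    ContinuousLinearMap.smul_apply, ContinuousLinearMap.comp_apply,
    ContinuousLinearMap.coe_fst', ContinuousLinearMap.coe_snd',
    ContinuousLinearMap.neg_apply, smul_eq_mul]
  simp only [Pi.mul_apply, Pi.sub_apply, Pi.add_apply, Pi.neg_apply, Matrix.cons_val, Matrix.cons_val_zero,
    Matrix.cons_val_one, Matrix.cons_val_two, Matrix.head_cons, Matrix.tail_cons, Matrix.vecHead, Matrix.vecTail, Function.comp_apply, Fin.succ_zero_eq_one, Matrix.cons_val_succ, ContinuousLinearMap.sub_apply,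
    ContinuousLinearMap.add_apply, ContinuousLinearMap.smul_apply, ContinuousLinearMap.neg_apply,
    ContinuousLinearMap.comp_apply, ContinuousLinearMap.coe_fst', ContinuousLinearMap.coe_snd', smul_eq_mul,
    sin_add, cos_add]
  field_simp
  linear_combination ((1/8 : ℝ) * ρ ^ 3 * w ^ 3 * (-16 * w * sin w - 8 * sin w ^ 2 * cos w + 24 * sin w ^ 2 -
      24 * cos w + 24 * cos w ^ 2 - 8 * cos w ^ 3 + 8)) * sin_sq_add_cos_sq θ +
    ((1/8 : ℝ) * ρ ^ 3 * w ^ 3 * (24 - 8 * cos w)) * sin_sq_add_cos_sq w
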